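/- The determinant of the n×n matrix 𝓜ᴰ_n (type D) is a polynomial of degree exactly n(n-1) in t, for n ≥ 2. -/

import Mathlib

open Polynomial

/-- The `n × n` matrix `𝓜ᴰ_n` over `ℤ[t]`: its `(i, n)` entry (1-based) is
`2t^{C(n-i+1,2)} - t^{(n-i+1)(n-i)}`, and for `j < n` its `(i,j)` entry is
`t^{C(j-i+1,2)}` when `j - i + 1 ≥ 0` and `0` otherwise. -/
noncomputable def MatD (n : ℕ) : Matrix (Fin n) (Fin n) (Polynomial ℤ) :=
  Matrix.of fun i j =>
    if (j : ℕ) = n - 1 then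
      2 * (X : Polynomial ℤ) ^ ((n - (i : ℕ)).choose 2) -
        (X : Polynomial ℤ) ^ ((n - (i : ℕ)) * (n - (i : ℕ) - 1))
    else if (i : ℕ) ≤ (j : ℕ) + 1 then (X : Polynomial ℤ) ^ (((j : ℕ) + 1 - (i : ℕ)).choose 2)
    else 0

open Finset Equiv
lemma two_mul_choose_two (k : ℕ) : 2 * k.choose 2 = k * (k - 1) := by
  rw [Nat.choose_two_right]
  have := Nat.even_mul_pred_self k
  obtain ⟨c, hc⟩ := this
  omega

lemma choose_two_add_le (a b : ℕ) : a.choose 2 + b.choose 2 ≤ (a + b).choose 2 := by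
  have h1 := two_mul_choose_two a
  have h2 := two_mul_choose_two b
  have h3 := two_mul_choose_two (a + b)
  have : a * (a-1) + b * (b-1) ≤ (a+b) * (a+b-1) := by
    rcases a with _ | a
    · simp
    rcases b with _ | b
    · simp
    have e : a + 1 + (b + 1) - 1 = a + b + 1 := by omega
    simp only [Nat.add_sub_cancel, e]
    nlinarith
  omega

lemma sum_choose_two_le {α : Type*} (s : Finset α) (f : α → ℕ) :
    ∑ i ∈ s, (f i).choose 2 ≤ (∑ i ∈ s, f i).choose 2 := by
  induction s using Finset.cons_induction with
  | empty => simp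
  | cons a s ha ih =>
    rw [Finset.sum_cons, Finset.sum_cons]
    exact le_trans (Nat.add_le_add_left ih _) (choose_two_add_le _ _)

lemma MatD_apply_last (m : ℕ) (i : Fin (m+2)) :
    MatD (m+2) i (Fin.last (m+1)) =
      2 * (X : Polynomial ℤ) ^ ((m + 2 - (i:ℕ)).choose 2) -
        X ^ ((m + 2 - (i:ℕ)) * (m + 2 - (i:ℕ) - 1)) := by
  simp [MatD]

lemma MatD_apply_ne (m : ℕ) (i j : Fin (m+2)) (hj : j ≠ Fin.last (m+1)) :
    MatD (m+2) i j =
      if (i:ℕ) ≤ (j:ℕ) + 1 then (X : Polynomial ℤ) ^ (((j:ℕ) + 1 - (i:ℕ)).choose 2) else 0 := by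
  have h : (j : ℕ) ≠ m + 1 := fun h => hj (Fin.ext (by simpa using h))
  simp [MatD, h]

lemma sum_d_eq (m : ℕ) (σ : Perm (Fin (m+2)))
    (h : ∀ i : Fin (m+2), i ≠ Fin.last (m+1) → (σ i : ℕ) ≤ (i : ℕ) + 1) :
    ∑ i ∈ Finset.univ.erase (Fin.last (m+1)), ((i : ℕ) + 1 - (σ i : ℕ)) = (σ (Fin.last (m+1)) : ℕ) := by
  set L := Fin.last (m+1)
  have eq1 : ∑ i ∈ Finset.univ.erase L, ((i : ℕ) + 1 - (σ i : ℕ))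
      + ∑ i ∈ Finset.univ.erase L, (σ i : ℕ)
      = ∑ i ∈ Finset.univ.erase L, ((i : ℕ) + 1) := by
    rw [← Finset.sum_add_distrib]
    refine Finset.sum_congr rfl fun i hi => ?_
    have := h i (Finset.ne_of_mem_erase hi)
    omega
  have eq2 : ∑ i ∈ Finset.univ.erase L, (σ i : ℕ) + (σ L : ℕ)
      = ∑ i : Fin (m+2), (σ i : ℕ) :=
    Finset.sum_erase_add _ _ (Finset.mem_univ L)
  have eq3 : ∑ i : Fin (m+2), (σ i : ℕ) = ∑ i : Fin (m+2), (i : ℕ) :=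
    Equiv.sum_comp σ _
  have eq4 : ∑ i ∈ Finset.univ.erase L, ((i : ℕ) + 1) + ((L : ℕ) + 1)
      = ∑ i : Fin (m+2), ((i : ℕ) + 1) :=
    Finset.sum_erase_add _ _ (Finset.mem_univ L)
  have eq5 : ∑ i : Fin (m+2), ((i : ℕ) + 1) = ∑ i : Fin (m+2), (i : ℕ) + (m + 2) := by
    rw [Finset.sum_add_distrib]
    simp [Finset.card_univ]
  have hL : (L : ℕ) = m + 1 := rfl
  omega

lemma key_bound (m : ℕ) (σ : Perm (Fin (m+2)))
    (h : ∀ i : Fin (m+2), i ≠ Fin.last (m+1) → (σ i : ℕ) ≤ (i : ℕ) + 1) :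
    (∏ i, MatD (m+2) (σ i) i).natDegree ≤
      ((σ (Fin.last (m+1)) : ℕ)).choose 2
        + (m + 2 - (σ (Fin.last (m+1)) : ℕ)) * (m + 2 - (σ (Fin.last (m+1)) : ℕ) - 1) := by
  set L := Fin.last (m+1) with hLdef
  set r : ℕ := (σ L : ℕ) with hr
  calc (∏ i, MatD (m+2) (σ i) i).natDegree
      ≤ ∑ i, (MatD (m+2) (σ i) i).natDegree := Polynomial.natDegree_prod_le _ _
    _ = ∑ i ∈ Finset.univ.erase L, (MatD (m+2) (σ i) i).natDegree
          + (MatD (m+2) (σ L) L).natDegree := (Finset.sum_erase_add _ _ (Finset.mem_univ L)).symm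
    _ ≤ r.choose 2 + (m + 2 - r) * (m + 2 - r - 1) := by
        gcongr ?_ + ?_
        · calc ∑ i ∈ Finset.univ.erase L, (MatD (m+2) (σ i) i).natDegree
              = ∑ i ∈ Finset.univ.erase L, (((i:ℕ) + 1 - (σ i : ℕ)).choose 2) := by
                refine Finset.sum_congr rfl fun i hi => ?_
                rw [MatD_apply_ne m _ _ (Finset.ne_of_mem_erase hi),
                  if_pos (h i (Finset.ne_of_mem_erase hi)), natDegree_X_pow]
            _ ≤ (∑ i ∈ Finset.univ.erase L, ((i:ℕ) + 1 - (σ i : ℕ))).choose 2 :=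
                sum_choose_two_le _ _
            _ = r.choose 2 := by rw [sum_d_eq m σ h]
        · rw [MatD_apply_last]
          refine le_trans (Polynomial.natDegree_sub_le _ _) (max_le ?_ ?_)
          · refine le_trans (Polynomial.natDegree_mul_le) ?_
            rw [Polynomial.natDegree_X_pow]
            have : (m + 2 - r).choose 2 ≤ (m + 2 - r) * (m + 2 - r - 1) := by
              have := two_mul_choose_two (m + 2 - r)
              omega
            simpa using this
          · rw [Polynomial.natDegree_X_pow]

lemma arith_le (m r : ℕ) (hr : r ≤ m + 1) :
    r.choose 2 + (m + 2 - r) * (m + 2 - r - 1) ≤ (m + 2) * (m + 1) := by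
  have h1 := two_mul_choose_two r
  have key : r * (r - 1) + 2 * ((m + 2 - r) * (m + 2 - r - 1)) ≤ 2 * ((m + 2) * (m + 1)) := by
    rcases r with _ | r
    · simp
    · have e1 : r + 1 - 1 = r := rfl
      have e2 : m + 2 - (r + 1) = m + 1 - r := by omega
      have e3 : m + 1 - r - 1 = m - r := by omega
      rw [e1, e2, e3]
      obtain ⟨s, hs⟩ : ∃ s, m + 1 = r + s + 1 := ⟨m - r, by omega⟩
      have e4 : m + 1 - r = s + 1 := by omega
      have e5 : m - r = s := by omega
      rw [e4, e5, hs]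
      nlinarith
  omega

lemma arith_lt (m r : ℕ) (h1 : 1 ≤ r) (hr : r ≤ m + 1) :
    r.choose 2 + (m + 2 - r) * (m + 2 - r - 1) < (m + 2) * (m + 1) := by
  have h2 := two_mul_choose_two r
  have key : r * (r - 1) + 2 * ((m + 2 - r) * (m + 2 - r - 1)) < 2 * ((m + 2) * (m + 1)) := by
    obtain ⟨a, rfl⟩ : ∃ a, r = a + 1 := ⟨r - 1, by omega⟩
    obtain ⟨s, hs⟩ : ∃ s, m + 1 = a + s + 1 := ⟨m - a, by omega⟩
    have e1 : a + 1 - 1 = a := rfl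
    have e2 : m + 2 - (a + 1) = s + 1 := by omega
    have e3 : s + 1 - 1 = s := rfl
    rw [e1, e2, e3, hs]
    nlinarith
  omega

lemma coeff_prod_ne (m : ℕ) (σ : Perm (Fin (m+2))) (hσ : σ ≠ finRotate (m+2)) :
    (∏ i, MatD (m+2) (σ i) i).coeff ((m + 2) * (m + 1)) = 0 := by
  set L := Fin.last (m+1) with hLdef
  by_cases h : ∀ i : Fin (m+2), i ≠ L → (σ i : ℕ) ≤ (i : ℕ) + 1
  · -- all off-last entries nonzero; split on r = σ L
    set r : ℕ := (σ L : ℕ) with hr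
    rcases Nat.eq_zero_or_pos r with h0 | hpos
    · -- then σ = finRotate, contradiction
      exfalso
      apply hσ
      have hsum := sum_d_eq m σ h
      rw [← hr, h0] at hsum
      have hall : ∀ i ∈ Finset.univ.erase L, ((i : ℕ) + 1 - (σ i : ℕ)) = 0 :=
        (Finset.sum_eq_zero_iff).mp hsum
      ext i
      by_cases hi : i = L
      · subst hi
        have : (σ L : ℕ) = 0 := h0
        rw [show σ L = 0 from Fin.ext (by simpa using this)]
        rw [finRotate_succ_apply]
        have hL : (L : ℕ) = m + 1 := rfl
        simp [Fin.add_def, hL]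
      · have h1 := hall i (Finset.mem_erase.mpr ⟨hi, Finset.mem_univ i⟩)
        have h2 := h i hi
        have h3 : (σ i : ℕ) = (i : ℕ) + 1 := by omega
        have h4 : ((finRotate (m+2)) i : ℕ) = (i : ℕ) + 1 := coe_finRotate_of_ne_last hi
        exact h3.trans h4.symm
    · apply Polynomial.coeff_eq_zero_of_natDegree_lt
      have hb := key_bound m σ h
      have hrle : r ≤ m + 1 := by
        have := (σ L).isLt
        omega
      exact lt_of_le_of_lt hb (arith_lt m r hpos hrle)
  · push_neg at h
    obtain ⟨i, hi, hgt⟩ := h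
    have hz : MatD (m+2) (σ i) i = 0 := by
      rw [MatD_apply_ne m _ _ hi, if_neg (by omega)]
    have hp : (∏ i, MatD (m+2) (σ i) i) = 0 := Finset.prod_eq_zero (Finset.mem_univ i) hz
    rw [hp]
    simp

lemma coeff_prod_rot (m : ℕ) :
    (∏ i, MatD (m+2) (finRotate (m+2) i) i).coeff ((m + 2) * (m + 1)) = -1 := by
  set L := Fin.last (m+1) with hLdef
  have hprod : (∏ i, MatD (m+2) (finRotate (m+2) i) i) = MatD (m+2) (finRotate (m+2) L) L := by
    refine Finset.prod_eq_single L (fun i _ hi => ?_) (fun h => absurd (Finset.mem_univ L) h)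
    rw [MatD_apply_ne m _ _ hi, if_pos (le_of_eq (coe_finRotate_of_ne_last hi)),
      coe_finRotate_of_ne_last hi]
    simp
  rw [hprod, show finRotate (m+2) L = 0 from finRotate_last, MatD_apply_last]
  have h0 : ((0 : Fin (m+2)) : ℕ) = 0 := rfl
  rw [h0, Nat.sub_zero]
  have hne : (m + 2).choose 2 ≠ (m + 2) * (m + 1) := by
    have h1 : 2 * (m + 2).choose 2 = (m + 2) * (m + 1) := by
      have := two_mul_choose_two (m + 2)
      simpa using this
    have h2 : 0 < (m + 2) * (m + 1) := by positivity
    omega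
  have h2C : (2 : Polynomial ℤ) * X ^ ((m+2).choose 2) = C 2 * X ^ ((m+2).choose 2) := by
    norm_num
  rw [Polynomial.coeff_sub, h2C, Polynomial.coeff_C_mul, Polynomial.coeff_X_pow,
    Polynomial.coeff_X_pow]
  have e : (m + 2) * (m + 2 - 1) = (m + 2) * (m + 1) := by norm_num
  rw [e, if_pos rfl, if_neg (Ne.symm hne)]
  ring

/-- `det 𝓜ᴰ_n` is a polynomial of degree exactly `n(n-1)`, for `n ≥ 2`. -/
theorem det_MatD_degree (n : ℕ) (hn : 2 ≤ n) :
    (MatD n).det.degree = ((n * (n - 1) : ℕ) : WithBot ℕ) := by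
  obtain ⟨m, rfl⟩ : ∃ m, n = m + 2 := ⟨n - 2, by omega⟩
  have hdet : (MatD (m+2)).det
      = ∑ σ : Perm (Fin (m+2)),
          ((Equiv.Perm.sign σ : ℤ) : Polynomial ℤ) * ∏ i, MatD (m+2) (σ i) i :=
    Matrix.det_apply' _
  have hcoeff : (MatD (m+2)).det.coeff ((m + 2) * (m + 1)) = (-1) ^ m := by
    rw [hdet, Polynomial.finset_sum_coeff]
    rw [Finset.sum_eq_single (finRotate (m+2))]
    · rw [Polynomial.coeff_intCast_mul, coeff_prod_rot m]
      have hs : Equiv.Perm.sign (finRotate (m+2)) = (-1) ^ (m+1) := by rw [sign_finRotate, show m + 2 - 1 = m + 1 by omega]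
      rw [hs]
      push_cast
      ring
    · intro σ _ hσ
      rw [Polynomial.coeff_intCast_mul, coeff_prod_ne m σ hσ, mul_zero]
    · intro h
      exact absurd (Finset.mem_univ _) h
  have hndle : (MatD (m+2)).det.natDegree ≤ (m + 2) * (m + 1) := by
    rw [hdet]
    refine Polynomial.natDegree_sum_le_of_forall_le _ _ fun σ _ => ?_
    refine le_trans (Polynomial.natDegree_mul_le) ?_
    rw [Polynomial.natDegree_intCast, zero_add]
    by_cases h : ∀ i : Fin (m+2), i ≠ Fin.last (m+1) → (σ i : ℕ) ≤ (i : ℕ) + 1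
    · refine le_trans (key_bound m σ h) ?_
      refine arith_le m _ ?_
      have := (σ (Fin.last (m+1))).isLt
      omega
    · push_neg at h
      obtain ⟨i, hi, hgt⟩ := h
      have hz : MatD (m+2) (σ i) i = 0 := by
        rw [MatD_apply_ne m _ _ hi, if_neg (by omega)]
      have hp : (∏ i, MatD (m+2) (σ i) i) = 0 := Finset.prod_eq_zero (Finset.mem_univ i) hz
      rw [hp]
      simp
  have hc0 : (MatD (m+2)).det.coeff ((m + 2) * (m + 1)) ≠ 0 := by
    rw [hcoeff]
    positivity
  have hne0 : (MatD (m+2)).det ≠ 0 := fun h => hc0 (by simp [h])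
  have hnd : (MatD (m+2)).det.natDegree = (m + 2) * (m + 1) :=
    le_antisymm hndle (Polynomial.le_natDegree_of_ne_zero hc0)
  rw [Polynomial.degree_eq_natDegree hne0, hnd]
  norm_num
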